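/- arXiv:2311.12634 — 5 statements merged into one kernel-verified Lean document; each statement's English description precedes it below -/
import Mathlib

section
/- (q-Vandermonde formula) Let 0 < q < 1 be a real number, let x and y be real numbers, and let n be a natural number. Define, for a real number t, [t]_q = (1 - q^t)/(1 - q) (real exponentiation), and the q-falling factorial [t]_{m} = [t]_q [t-1]_q ⋯ [t-m+1]_q (with [t]_0 = 1). Then [x+y]_{n} = Σ_{k=0}^{n} [n choose k]_q · q^{k(y - n + k)} · [x]_{k} · [y]_{n-k}. -/
/-- The `q`-number of a real `t`: `[t]_q = (1 - q^t)/(1 - q)` (real exponentiation). -/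
noncomputable def qnumR (q t : ℝ) : ℝ := (1 - q ^ t) / (1 - q)

/-- The `q`-number `[m]_q = (1 - q^m)/(1 - q)`. -/
noncomputable def qnum (q : ℝ) (m : ℕ) : ℝ := (1 - q ^ m) / (1 - q)

/-- The `q`-factorial `[n]_q! = [1]_q [2]_q ⋯ [n]_q`. -/
noncomputable def qfact (q : ℝ) (n : ℕ) : ℝ := ∏ i ∈ Finset.range n, qnum q (i + 1)

/-- The `q`-binomial coefficient `[n choose k]_q = [n]_q! / ([k]_q! [n-k]_q!)`. -/
noncomputable def qbinom (q : ℝ) (n k : ℕ) : ℝ := qfact q n / (qfact q k * qfact q (n - k))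

/-- The `q`-falling factorial `[t]_m = [t]_q [t-1]_q ⋯ [t-m+1]_q` of a real `t`. -/
noncomputable def qfall (q t : ℝ) (m : ℕ) : ℝ := ∏ i ∈ Finset.range m, qnumR q (t - i)

lemma qnum_pos {q : ℝ} (hq0 : 0 < q) (hq1 : q < 1) (m : ℕ) : 0 < qnum q (m+1) := by
  unfold qnum
  have h1 : q ^ (m+1) < 1 := pow_lt_one₀ hq0.le hq1 (Nat.succ_ne_zero m)
  apply div_pos <;> linarith

lemma qfact_pos {q : ℝ} (hq0 : 0 < q) (hq1 : q < 1) (n : ℕ) : 0 < qfact q n := by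
  unfold qfact
  exact Finset.prod_pos fun i _ => qnum_pos hq0 hq1 i

lemma qnum_add {q : ℝ} (hq1 : q < 1) (a b : ℕ) :
    qnum q (a+b) = q ^ a * qnum q b + qnum q a := by
  unfold qnum
  have h : (1:ℝ) - q ≠ 0 := by linarith
  field_simp
  rw [pow_add]; ring

lemma qnumR_add {q : ℝ} (hq0 : 0 < q) (hq1 : q < 1) (a b : ℝ) :
    qnumR q (a+b) = q ^ a * qnumR q b + qnumR q a := by
  unfold qnumR
  have h : (1:ℝ) - q ≠ 0 := by linarith
  rw [Real.rpow_add hq0]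
  field_simp
  ring

lemma qfall_succ (q t : ℝ) (m : ℕ) :
    qfall q t (m+1) = qfall q t m * qnumR q (t - m) := Finset.prod_range_succ _ _

lemma qfact_succ (q : ℝ) (n : ℕ) :
    qfact q (n+1) = qfact q n * qnum q (n+1) := Finset.prod_range_succ _ _

lemma qpascal {q : ℝ} (hq0 : 0 < q) (hq1 : q < 1) {i n : ℕ} (h : i + 1 ≤ n) :
    qbinom q (n+1) (i+1) = q ^ (i+1) * qbinom q n (i+1) + qbinom q n i := by
  obtain ⟨m, rfl⟩ := Nat.exists_eq_add_of_le h
  have e1 : i + 1 + m + 1 - (i + 1) = m + 1 := by omega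
  have e2 : i + 1 + m - (i + 1) = m := by omega
  have e3 : i + 1 + m - i = m + 1 := by omega
  have e4 : i + 1 + m + 1 = (i + 1 + m) + 1 := by omega
  unfold qbinom
  rw [e1, e2, e3, e4, qfact_succ, show i + 1 + m + 1 = (i+1) + (m+1) from by omega,
    qnum_add hq1, qfact_succ q m, qfact_succ q i]
  have f1 := (qfact_pos hq0 hq1 i).ne'
  have f2 := (qfact_pos hq0 hq1 m).ne'
  have f3 := (qnum_pos hq0 hq1 i).ne'
  have f4 := (qnum_pos hq0 hq1 m).ne'
  field_simp

noncomputable def Aterm (q x y : ℝ) (n k : ℕ) : ℝ :=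
  qbinom q n k * q ^ ((k:ℝ) * (y - (n:ℝ) + (k:ℝ))) * qfall q x k * qfall q y (n + 1 - k)

noncomputable def Uterm (q x y : ℝ) (n j : ℕ) : ℝ :=
  qbinom q n (j-1) * q ^ ((j:ℝ) * (y - ((n:ℝ)+1) + (j:ℝ))) * qfall q x j * qfall q y (n + 1 - j)


/-- The `q`-Vandermonde formula:
`[x+y]_n = Σ_{k=0}^{n} [n choose k]_q q^{k(y-n+k)} [x]_k [y]_{n-k}`. -/
theorem stmt2 (q : ℝ) (hq0 : 0 < q) (hq1 : q < 1) (x y : ℝ) (n : ℕ) :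
    qfall q (x + y) n
      = ∑ k ∈ Finset.range (n + 1),
          qbinom q n k * q ^ ((k : ℝ) * (y - (n : ℝ) + (k : ℝ)))
            * qfall q x k * qfall q y (n - k) := by
  induction n with
  | zero =>
    simp [qfall, qbinom, qfact]
  | succ n ih =>
    have hfn := (qfact_pos hq0 hq1 n).ne'
    have hfn1 := (qfact_pos hq0 hq1 (n+1)).ne'
    have hf0 : qfact q 0 = 1 := by simp [qfact]
    have key : ∀ k ∈ Finset.range (n+1),
        (qbinom q n k * q ^ ((k : ℝ) * (y - (n : ℝ) + (k : ℝ)))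
            * qfall q x k * qfall q y (n - k)) * qnumR q (x + y - (n:ℝ))
          = Aterm q x y n k + Uterm q x y n (k+1) := by
      intro k hk
      have hk' : k ≤ n := Nat.lt_succ_iff.mp (Finset.mem_range.mp hk)
      have hc : ((n - k : ℕ) : ℝ) = (n : ℝ) - k := by
        push_cast [hk']; ring
      have hsplit := qnumR_add hq0 hq1 (y - (n:ℝ) + k) (x - k)
      rw [show (y - (n:ℝ) + k) + (x - k) = x + y - n from by ring] at hsplit
      rw [hsplit]
      unfold Aterm Uterm
      rw [show n + 1 - k = (n - k) + 1 from by omega, qfall_succ, hc,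
        show y - ((n:ℝ) - (k:ℝ)) = y - (n:ℝ) + (k:ℝ) from by ring,
        qfall_succ q x k, Nat.add_sub_cancel,
        show n + 1 - (k + 1) = n - k from by omega]
      push_cast
      have hqe : q ^ (((k:ℝ)+1) * (y - ((n:ℝ)+1) + ((k:ℝ)+1)))
          = q ^ ((k:ℝ)*(y - (n:ℝ)+(k:ℝ))) * q ^ (y - (n:ℝ) + (k:ℝ)) := by
        rw [← Real.rpow_add hq0]; congr 1; ring
      rw [hqe]; ring
    have hT0 : qbinom q (n+1) 0 * q ^ ((0:ℝ) * (y - ((n:ℝ)+1) + 0))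
            * qfall q x 0 * qfall q y (n+1) = Aterm q x y n 0 := by
      unfold Aterm
      norm_num [qbinom, hf0, div_self hfn1, div_self hfn]
    have hTtop : qbinom q (n+1) (n+1) * q ^ (((n:ℝ)+1) * (y - ((n:ℝ)+1) + ((n:ℝ)+1)))
            * qfall q x (n+1) * qfall q y (n-n) = Uterm q x y n (n+1) := by
      unfold Uterm
      rw [Nat.add_sub_cancel, show n + 1 - (n+1) = 0 from by omega,
        show n - n = 0 from by omega]
      push_cast
      simp [qbinom, hf0, div_self hfn1, div_self hfn]
    have hTmid : ∀ i ∈ Finset.range n,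
        qbinom q (n+1) (i+1) * q ^ (((i:ℝ)+1) * (y - ((n:ℝ)+1) + ((i:ℝ)+1)))
            * qfall q x (i+1) * qfall q y (n-i)
          = Aterm q x y n (i+1) + Uterm q x y n (i+1) := by
      intro i hi
      have hi' : i + 1 ≤ n := Finset.mem_range.mp hi
      rw [qpascal hq0 hq1 hi']
      unfold Aterm Uterm
      rw [Nat.add_sub_cancel, show n + 1 - (i+1) = n - i from by omega]
      push_cast
      have hnp : q ^ (i+1) = q ^ ((i:ℝ)+1) := by
        rw [← Real.rpow_natCast q (i+1)]; norm_num
      have hqe : q ^ ((i:ℝ)+1) * q ^ (((i:ℝ)+1) * (y - ((n:ℝ)+1) + ((i:ℝ)+1)))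
          = q ^ (((i:ℝ)+1) * (y - (n:ℝ) + ((i:ℝ)+1))) := by
        rw [← Real.rpow_add hq0]; congr 1; ring
      rw [hnp, ← hqe]; ring
    rw [qfall_succ, ih, Finset.sum_mul, Finset.sum_congr rfl key,
      Finset.sum_add_distrib, Finset.sum_range_succ' (fun k => Aterm q x y n k) n,
      Finset.sum_range_succ (fun k => Uterm q x y n (k+1)) n]
    push_cast
    rw [Finset.sum_range_succ _ (n+1), Finset.sum_range_succ' _ n]
    push_cast
    rw [Finset.sum_congr rfl hTmid, hT0, hTtop, Finset.sum_add_distrib]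
    ring
end

section
/- Let 0 < q < 1, let t > 0 be a real number, and let ν ≥ 1 be a natural number. Define F(y) = 1 − ∏_{i=1}^{ν} (1 − y/(q^{i-1} t)). Then for every real y ≠ 0, the q-derivative of F at y satisfies (F(y) − F(qy)) / ((1−q) y) = ([ν]_q / (q^{ν−1} t)) · ∏_{i=1}^{ν−1} (1 − y/(q^{i-1} t)). -/
/-- The `q`-derivative of the `q`-distribution function
`F(y) = 1 − ∏_{i=1}^{ν} (1 − y/(q^{i-1} t))` of the minimum of `ν` dependent `q`-uniform
random variables is `([ν]_q / (q^{ν−1} t)) ∏_{i=1}^{ν−1} (1 − y/(q^{i-1} t))`. -/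
theorem stmt10 (q t : ℝ) (hq0 : 0 < q) (hq1 : q < 1) (ht : 0 < t) (ν : ℕ) (hν : 1 ≤ ν)
    (F : ℝ → ℝ)
    (hF : ∀ y : ℝ, F y = 1 - ∏ i ∈ Finset.range ν, (1 - y / (q ^ i * t)))
    (y : ℝ) (hy : y ≠ 0) :
    (F y - F (q * y)) / ((1 - q) * y)
      = qnum q ν / (q ^ (ν - 1) * t) * ∏ i ∈ Finset.range (ν - 1), (1 - y / (q ^ i * t)) := by
  obtain ⟨n, rfl⟩ : ∃ n, ν = n + 1 := ⟨ν - 1, (Nat.succ_pred_eq_of_pos hν).symm⟩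
  have hqne : q ≠ 0 := ne_of_gt hq0
  have htne : t ≠ 0 := ne_of_gt ht
  have h1q : (1 : ℝ) - q ≠ 0 := by linarith
  have hqn : q ^ n ≠ 0 := pow_ne_zero _ hqne
  simp only [Nat.add_sub_cancel]
  have e1 : ∏ i ∈ Finset.range (n + 1), (1 - q * y / (q ^ i * t))
      = (∏ i ∈ Finset.range n, (1 - y / (q ^ i * t))) * (1 - q * y / t) := by
    rw [Finset.prod_range_succ']
    congr 1
    · refine Finset.prod_congr rfl fun i _ => ?_
      have : q ^ (i + 1) ≠ 0 := pow_ne_zero _ hqne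
      field_simp
      ring
    · simp
  have e2 : ∏ i ∈ Finset.range (n + 1), (1 - y / (q ^ i * t))
      = (∏ i ∈ Finset.range n, (1 - y / (q ^ i * t))) * (1 - y / (q ^ n * t)) :=
    Finset.prod_range_succ _ _
  rw [hF y, hF (q * y), e1, e2, qnum]
  set Q := ∏ i ∈ Finset.range n, (1 - y / (q ^ i * t))
  field_simp
  ring
end

section
/- Let 0 < q < 1, let t > 0 be a real number, and let ν ≥ 1 be a natural number. Then the Jackson q-integral over [0, t] of the function f(y) = ([ν]_q / (q^{ν−1} t)) · ∏_{i=1}^{ν−1} (1 − y/(q^{i-1} t)) equals 1; equivalently, [ν]_q q^{-(ν-1)} (1−q) Σ_{n=0}^{∞} q^n ∏_{i=1}^{ν−1} (1 − q^{n−i+1}) = 1. -/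
lemma key_hasSum (q : ℝ) (hq0 : 0 < q) (hq1 : q < 1) (m : ℕ) :
    HasSum (fun n : ℕ => q ^ n * ∏ i ∈ Finset.range m, (1 - q ^ n / q ^ i))
      (q ^ m / (1 - q ^ (m + 1))) := by
  have hqne : q ≠ 0 := hq0.ne'
  have hd : (0 : ℝ) < 1 - q ^ (m + 1) := by
    have := pow_lt_one₀ hq0.le hq1 (by omega : m + 1 ≠ 0)
    linarith
  set f : ℕ → ℝ := fun n => q ^ n * ∏ i ∈ Finset.range m, (1 - q ^ n / q ^ i) with hf
  set c : ℝ := q ^ m / (1 - q ^ (m + 1)) with hc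
  -- f vanishes for n < m
  have hzero : ∀ i < m, f i = 0 := by
    intro i hi
    have : (∏ j ∈ Finset.range m, (1 - q ^ i / q ^ j)) = 0 :=
      Finset.prod_eq_zero (Finset.mem_range.mpr hi) (by
        rw [div_self (pow_ne_zero i hqne)]; ring)
    simp [hf, this]
  -- shifted formula
  have hshift : ∀ n : ℕ, f (n + m) =
      q ^ m * q ^ n * ∏ j ∈ Finset.range m, (1 - q ^ (n + 1 + j)) := by
    intro n
    have hprod : (∏ i ∈ Finset.range m, (1 - q ^ (n + m) / q ^ i)) =
        ∏ j ∈ Finset.range m, (1 - q ^ (n + 1 + j)) := by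
      rw [← Finset.prod_range_reflect (fun j => (1 - q ^ (n + 1 + j))) m]
      refine Finset.prod_congr rfl fun i hi => ?_
      have hi' := Finset.mem_range.mp hi
      have hpow : q ^ (n + m) = q ^ (n + 1 + (m - 1 - i)) * q ^ i := by
        rw [← pow_add]; congr 1; omega
      rw [hpow, mul_div_cancel_right₀ _ (pow_ne_zero i hqne)]
    simp only [hf]
    rw [hprod, pow_add]
    ring
  -- the telescoping sequence
  set T : ℕ → ℝ := fun N => ∏ j ∈ Finset.range (m + 1), (1 - q ^ (N + j)) with hT
  have hT0 : T 0 = 0 :=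
    Finset.prod_eq_zero (Finset.mem_range.mpr (Nat.succ_pos m)) (by simp)
  have hTdiff : ∀ N : ℕ, T (N + 1) - T N =
      q ^ N * (1 - q ^ (m + 1)) * ∏ j ∈ Finset.range m, (1 - q ^ (N + 1 + j)) := by
    intro N
    have h1 : T (N + 1) =
        (∏ j ∈ Finset.range m, (1 - q ^ (N + 1 + j))) * (1 - q ^ (N + 1 + m)) :=
      Finset.prod_range_succ _ m
    have h2 : T N = (∏ j ∈ Finset.range m, (1 - q ^ (N + 1 + j))) * (1 - q ^ N) := by
      simp only [hT]
      rw [Finset.prod_range_succ' (fun j => (1 - q ^ (N + j))) m]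
      congr 1
      exact Finset.prod_congr rfl fun j _ => by rw [show N + (j + 1) = N + 1 + j from by omega]
    rw [h1, h2, show N + 1 + m = N + (m + 1) by omega, pow_add]
    ring
  have hstep : ∀ N : ℕ, f (N + m) = c * T (N + 1) - c * T N := by
    intro N
    rw [hshift N, ← mul_sub, hTdiff N, hc]
    field_simp
  have hps : ∀ N : ℕ, ∑ n ∈ Finset.range N, f (n + m) = c * T N := by
    intro N
    induction N with
    | zero => simp [hT0]
    | succ N ih =>
      rw [Finset.sum_range_succ, ih, hstep N]
      ring
  -- nonnegativity of shifted terms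
  have hnonneg : ∀ n : ℕ, 0 ≤ f (n + m) := by
    intro n
    rw [hshift n]
    refine mul_nonneg (mul_nonneg (pow_nonneg hq0.le m) (pow_nonneg hq0.le n)) ?_
    refine Finset.prod_nonneg fun j _ => ?_
    have : q ^ (n + 1 + j) ≤ 1 := pow_le_one₀ hq0.le hq1.le
    linarith
  -- convergence of T to 1
  have hTlim : Filter.Tendsto T Filter.atTop (nhds 1) := by
    have h1 : Filter.Tendsto (fun N : ℕ => ∏ j ∈ Finset.range (m + 1), (1 - q ^ (N + j)))
        Filter.atTop (nhds (∏ j ∈ Finset.range (m + 1), (1 : ℝ))) := by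
      refine tendsto_finset_prod _ fun j _ => ?_
      have h0 : Filter.Tendsto (fun N : ℕ => q ^ (N + j)) Filter.atTop (nhds 0) := by
        have : (fun N : ℕ => q ^ (N + j)) = fun N : ℕ => q ^ N * q ^ j := by
          funext N; rw [pow_add]
        rw [this]
        simpa using (tendsto_pow_atTop_nhds_zero_of_lt_one hq0.le hq1).mul_const (q ^ j)
      have := (tendsto_const_nhds (α := ℕ) (x := (1 : ℝ))).sub h0
      simpa using this
    simpa using h1
  have hshiftSum : HasSum (fun n : ℕ => f (n + m)) c := by
    rw [hasSum_iff_tendsto_nat_of_nonneg hnonneg]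
    have := (hTlim.const_mul c)
    simp only [mul_one] at this
    refine this.congr fun N => (hps N).symm
  have hsum0 : ∑ i ∈ Finset.range m, f i = 0 :=
    Finset.sum_eq_zero fun i hi => hzero i (Finset.mem_range.mp hi)
  have := (hasSum_nat_add_iff m).mp hshiftSum
  rwa [hsum0, add_zero] at this

/-- The Jackson `q`-integral over `[0, t]` of the `q`-density function
`f(y) = ([ν]_q / (q^{ν−1} t)) ∏_{i=1}^{ν−1} (1 − y/(q^{i-1} t))` of the minimum of `ν`
dependent `q`-uniform random variables equals `1`. -/
theorem stmt11 (q t : ℝ) (hq0 : 0 < q) (hq1 : q < 1) (ht : 0 < t) (ν : ℕ) (hν : 1 ≤ ν) :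
    (1 - q) * t * ∑' n : ℕ, q ^ n *
        (qnum q ν / (q ^ (ν - 1) * t)
          * ∏ i ∈ Finset.range (ν - 1), (1 - t * q ^ n / (q ^ i * t)))
      = 1 := by
  obtain ⟨m, rfl⟩ : ∃ m, ν = m + 1 := ⟨ν - 1, by omega⟩
  have hqne : q ≠ 0 := hq0.ne'
  have htne : t ≠ 0 := ht.ne'
  simp only [Nat.add_sub_cancel]
  have hsummand : ∀ n : ℕ, q ^ n *
      (qnum q (m + 1) / (q ^ m * t)
        * ∏ i ∈ Finset.range m, (1 - t * q ^ n / (q ^ i * t)))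
      = qnum q (m + 1) / (q ^ m * t) * (q ^ n * ∏ i ∈ Finset.range m, (1 - q ^ n / q ^ i)) := by
    intro n
    have : ∀ i ∈ Finset.range m, (1 - t * q ^ n / (q ^ i * t)) = (1 - q ^ n / q ^ i) := by
      intro i _
      rw [mul_comm (q ^ i) t, mul_div_mul_left _ _ htne]
    rw [Finset.prod_congr rfl this]
    ring
  rw [tsum_congr hsummand, tsum_mul_left, (key_hasSum q hq0 hq1 m).tsum_eq]
  have hd : (0 : ℝ) < 1 - q ^ (m + 1) := by
    have := pow_lt_one₀ hq0.le hq1 (by omega : m + 1 ≠ 0)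
    linarith
  have h1q : (0:ℝ) < 1 - q := by linarith
  rw [qnum]
  field_simp
end

section
/- Let 0 < q < 1, let t > 0 be a real number, and let k, ν be natural numbers with 1 ≤ k ≤ ν. Then the Jackson q-integral over [0, t] of the function f(y) = q^{-k(ν-k)} · ([ν]_q! / ([k−1]_q! [ν−k]_q!)) · (y^{k-1}/t^k) · ∏_{j=1}^{ν-k} (1 − y/(q^{j-1} t)) equals 1; equivalently, q^{-k(ν-k)} ([ν]_q!/([k−1]_q![ν−k]_q!)) (1−q) Σ_{n=0}^{∞} q^{nk} ∏_{j=1}^{ν-k} (1 − q^{n−j+1}) = 1. -/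
section aux

variable {q : ℝ}

private lemma qpow_lt_one (hq0 : 0 < q) (hq1 : q < 1) {n : ℕ} (hn : n ≠ 0) : q ^ n < 1 :=
  pow_lt_one₀ hq0.le hq1 hn

private lemma factor_pos (hq0 : 0 < q) (hq1 : q < 1) (n : ℕ) : 0 < 1 - q ^ (n + 1) :=
  sub_pos.mpr (qpow_lt_one hq0 hq1 (Nat.succ_ne_zero n))

private lemma key_summable (hq0 : 0 < q) (hq1 : q < 1) (m k : ℕ) (hk : 1 ≤ k) :
    Summable (fun i : ℕ => q ^ (i * k) * ∏ l ∈ Finset.range m, (1 - q ^ (i + l + 1))) := by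
  apply Summable.of_nonneg_of_le
    (f := fun i : ℕ => (q ^ k) ^ i)
  · intro i
    apply mul_nonneg (pow_nonneg hq0.le _)
    exact Finset.prod_nonneg fun l _ => (factor_pos hq0 hq1 (i + l)).le
  · intro i
    rw [← pow_mul, mul_comm k i]
    calc q ^ (i * k) * ∏ l ∈ Finset.range m, (1 - q ^ (i + l + 1))
        ≤ q ^ (i * k) * 1 := by
          apply mul_le_mul_of_nonneg_left _ (pow_nonneg hq0.le _)
          exact Finset.prod_le_one (fun l _ => (factor_pos hq0 hq1 (i + l)).le)
            (fun l _ => by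
              have := pow_nonneg hq0.le (i + l + 1); linarith)
      _ = q ^ (i * k) := mul_one _
  · exact summable_geometric_of_lt_one (pow_nonneg hq0.le k)
      (qpow_lt_one hq0 hq1 (by omega))

private lemma prod_ne_zero (hq0 : 0 < q) (hq1 : q < 1) (a b : ℕ) (ha : 1 ≤ a) :
    (∏ j ∈ Finset.range b, (1 - q ^ (a + j))) ≠ 0 := by
  apply Finset.prod_ne_zero_iff.mpr
  intro j _
  have : q ^ (a + j) < 1 := qpow_lt_one hq0 hq1 (by omega)
  intro h; linarith [h]

private lemma key (hq0 : 0 < q) (hq1 : q < 1) :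
    ∀ m : ℕ, ∀ k : ℕ, 1 ≤ k →
    (∑' i : ℕ, q ^ (i * k) * ∏ l ∈ Finset.range m, (1 - q ^ (i + l + 1)))
      = (∏ l ∈ Finset.range m, (1 - q ^ (l + 1))) /
        ∏ j ∈ Finset.range (m + 1), (1 - q ^ (k + j)) := by
  intro m
  induction m with
  | zero =>
    intro k hk
    simp only [Finset.range_zero, Finset.prod_empty, mul_one, zero_add,
      Finset.range_one, Finset.prod_singleton, Nat.add_zero]
    have : ∀ i : ℕ, q ^ (i * k) = (q ^ k) ^ i := fun i => by rw [← pow_mul, mul_comm]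
    rw [tsum_congr this, tsum_geometric_of_lt_one (pow_nonneg hq0.le k)
      (qpow_lt_one hq0 hq1 (by omega)), one_div]
  | succ m ih =>
    intro k hk
    have hs1 := key_summable hq0 hq1 m k hk
    have hs2 := key_summable hq0 hq1 m (k + 1) (by omega)
    have hterm : ∀ i : ℕ,
        q ^ (i * k) * ∏ l ∈ Finset.range (m + 1), (1 - q ^ (i + l + 1))
          = q ^ (i * k) * ∏ l ∈ Finset.range m, (1 - q ^ (i + l + 1))
            - q ^ (m + 1) * (q ^ (i * (k + 1)) * ∏ l ∈ Finset.range m, (1 - q ^ (i + l + 1))) := by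
      intro i
      rw [Finset.prod_range_succ]
      ring
    rw [tsum_congr hterm, Summable.tsum_sub hs1 (hs2.mul_left _), tsum_mul_left, ih k hk,
      ih (k + 1) (by omega)]
    have hX : (∏ j ∈ Finset.range (m + 1), (1 - q ^ (k + j))) ≠ 0 :=
      prod_ne_zero hq0 hq1 k (m + 1) hk
    have hY : (∏ j ∈ Finset.range (m + 1), (1 - q ^ (k + 1 + j))) ≠ 0 :=
      prod_ne_zero hq0 hq1 (k + 1) (m + 1) (by omega)
    have hZ : (∏ j ∈ Finset.range (m + 1 + 1), (1 - q ^ (k + j))) ≠ 0 :=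
      prod_ne_zero hq0 hq1 k (m + 1 + 1) hk
    have hk0 : (1 - q ^ k) ≠ 0 := by
      have : q ^ k < 1 := qpow_lt_one hq0 hq1 (by omega)
      intro h; linarith [h]
    have hrel : (∏ j ∈ Finset.range (m + 1 + 1), (1 - q ^ (k + j)))
        = (∏ j ∈ Finset.range (m + 1), (1 - q ^ (k + 1 + j))) * (1 - q ^ k) := by
      rw [Finset.prod_range_succ' (fun j => 1 - q ^ (k + j)) (m + 1)]
      simp only [Nat.add_zero]
      congr 1
      exact Finset.prod_congr rfl fun j _ => by ring_nf
    have hrel2 : (∏ j ∈ Finset.range (m + 1 + 1), (1 - q ^ (k + j)))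
        = (∏ j ∈ Finset.range (m + 1), (1 - q ^ (k + j))) * (1 - q ^ (k + (m + 1))) := by
      rw [Finset.prod_range_succ]
    rw [Finset.prod_range_succ (fun l => 1 - q ^ (l + 1)) m]
    set A := ∏ l ∈ Finset.range m, (1 - q ^ (l + 1))
    set X := ∏ j ∈ Finset.range (m + 1), (1 - q ^ (k + j))
    set Y := ∏ j ∈ Finset.range (m + 1), (1 - q ^ (k + 1 + j))
    rw [hrel2]
    have hYX : Y = X * (1 - q ^ (k + (m + 1))) / (1 - q ^ k) := by
      field_simp
      rw [← hrel, hrel2]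
    rw [hYX]
    have hne : (1 - q ^ (k + (m + 1))) ≠ 0 := by
      have : q ^ (k + (m + 1)) < 1 := qpow_lt_one hq0 hq1 (by omega)
      intro h; linarith [h]
    field_simp
    ring

end aux

/-- The Jackson `q`-integral over `[0, t]` of the `q`-density function
`f(y) = q^{-k(ν-k)} ([ν]_q!/([k−1]_q![ν−k]_q!)) (y^{k-1}/t^k) ∏_{j=1}^{ν-k} (1 − y/(q^{j-1} t))`
of the `k`-th `q`-order statistic equals `1`. -/
theorem stmt13 (q t : ℝ) (hq0 : 0 < q) (hq1 : q < 1) (ht : 0 < t) (k ν : ℕ)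
    (hk : 1 ≤ k) (hkν : k ≤ ν) :
    (1 - q) * t * ∑' n : ℕ, q ^ n *
        (q ^ (-((k : ℤ) * ((ν : ℤ) - (k : ℤ))))
          * (qfact q ν / (qfact q (k - 1) * qfact q (ν - k)))
          * ((t * q ^ n) ^ (k - 1) / t ^ k)
          * ∏ j ∈ Finset.range (ν - k), (1 - t * q ^ n / (q ^ j * t)))
      = 1 := by
  obtain ⟨k', rfl⟩ : ∃ k', k = k' + 1 := ⟨k - 1, by omega⟩
  obtain ⟨m, rfl⟩ : ∃ m, ν = (k' + 1) + m := ⟨ν - (k' + 1), by omega⟩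
  have ht' : t ≠ 0 := ht.ne'
  have hq1' : (1 : ℝ) - q ≠ 0 := by intro h; linarith [h]
  have hqn : ∀ n : ℕ, (q : ℝ) ^ n ≠ 0 := fun n => pow_ne_zero n hq0.ne'
  -- simplify the natural subtraction and the zpow
  have hsub1 : k' + 1 - 1 = k' := by omega
  have hsub2 : k' + 1 + m - (k' + 1) = m := by omega
  have hzpow : q ^ (-(((k' + 1 : ℕ) : ℤ) * (((k' + 1 + m : ℕ) : ℤ) - ((k' + 1 : ℕ) : ℤ))))
      = (q ^ ((k' + 1) * m))⁻¹ := by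
    rw [show (-(((k' + 1 : ℕ) : ℤ) * (((k' + 1 + m : ℕ) : ℤ) - ((k' + 1 : ℕ) : ℤ))))
        = -(((k' + 1) * m : ℕ) : ℤ) by push_cast; ring]
    rw [zpow_neg, zpow_natCast]
  rw [hsub1, hsub2, hzpow]
  set R : ℝ := qfact q (k' + 1 + m) / (qfact q k' * qfact q m) with hR
  set c : ℝ := (q ^ ((k' + 1) * m))⁻¹ * R / t with hc
  -- simplify the summand
  have hsummand : ∀ n : ℕ,
      q ^ n * ((q ^ ((k' + 1) * m))⁻¹ * R * ((t * q ^ n) ^ k' / t ^ (k' + 1))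
        * ∏ j ∈ Finset.range m, (1 - t * q ^ n / (q ^ j * t)))
      = c * (q ^ (n * (k' + 1)) * ∏ j ∈ Finset.range m, (1 - q ^ n / q ^ j)) := by
    intro n
    have hprod : (∏ j ∈ Finset.range m, (1 - t * q ^ n / (q ^ j * t)))
        = ∏ j ∈ Finset.range m, (1 - q ^ n / q ^ j) := by
      refine Finset.prod_congr rfl fun j _ => ?_
      rw [mul_comm (q ^ j) t, mul_div_mul_left _ _ ht']
    rw [hprod, hc]
    field_simp
    ring
  rw [tsum_congr hsummand, tsum_mul_left]
  -- evaluate the remaining series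
  set g : ℕ → ℝ := fun n => q ^ (n * (k' + 1)) * ∏ j ∈ Finset.range m, (1 - q ^ n / q ^ j)
    with hg
  have hgshift : ∀ i : ℕ, g (i + m)
      = q ^ (m * (k' + 1)) * (q ^ (i * (k' + 1)) * ∏ l ∈ Finset.range m, (1 - q ^ (i + l + 1))) := by
    intro i
    have hprod : (∏ j ∈ Finset.range m, (1 - q ^ (i + m) / q ^ j))
        = ∏ l ∈ Finset.range m, (1 - q ^ (i + l + 1)) := by
      rw [← Finset.prod_range_reflect (fun l => 1 - q ^ (i + l + 1)) m]
      refine Finset.prod_congr rfl fun j hj => ?_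
      have hjm : j < m := Finset.mem_range.mp hj
      congr 1
      rw [div_eq_iff (hqn j), ← pow_add]
      congr 1
      omega
    show q ^ ((i + m) * (k' + 1)) * ∏ j ∈ Finset.range m, (1 - q ^ (i + m) / q ^ j) = _
    rw [hprod, ← mul_assoc, ← pow_add]
    congr 2
    ring
  have hgsum : Summable g := by
    apply Summable.of_norm_bounded
      (g := fun n => (∏ j ∈ Finset.range m, (1 + (q ^ j)⁻¹)) * (q ^ (k' + 1)) ^ n)
    · exact (summable_geometric_of_lt_one (pow_nonneg hq0.le _)
        (pow_lt_one₀ hq0.le hq1 (by omega))).mul_left _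
    · intro n
      show ‖q ^ (n * (k' + 1)) * ∏ j ∈ Finset.range m, (1 - q ^ n / q ^ j)‖ ≤ _
      rw [norm_mul, mul_comm (∏ j ∈ Finset.range m, (1 + (q ^ j)⁻¹))]
      have hb1 : ‖q ^ (n * (k' + 1))‖ ≤ (q ^ (k' + 1)) ^ n := by
        rw [Real.norm_eq_abs, abs_of_nonneg (pow_nonneg hq0.le _), ← pow_mul,
          Nat.mul_comm n (k' + 1)]
      have hb2 : ‖∏ j ∈ Finset.range m, (1 - q ^ n / q ^ j)‖
          ≤ ∏ j ∈ Finset.range m, (1 + (q ^ j)⁻¹) := by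
        rw [Real.norm_eq_abs, Finset.abs_prod]
        apply Finset.prod_le_prod (fun j _ => abs_nonneg _)
        intro j _
        have e1 : q ^ n ≤ 1 := pow_le_one₀ hq0.le hq1.le
        have e2 : (0:ℝ) < q ^ j := pow_pos hq0 j
        have e3 : (0:ℝ) < (q ^ j)⁻¹ := inv_pos.mpr e2
        have e4 : q ^ n / q ^ j ≤ (q ^ j)⁻¹ := by
          rw [div_eq_mul_inv]
          nlinarith
        have e5 : 0 ≤ q ^ n / q ^ j := div_nonneg (pow_nonneg hq0.le n) e2.le
        rw [abs_le]
        constructor <;> linarith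
      exact mul_le_mul hb1 hb2 (norm_nonneg _) (by positivity)
  have hg0 : ∀ n ∈ Finset.range m, g n = 0 := by
    intro n hn
    show q ^ (n * (k' + 1)) * ∏ j ∈ Finset.range m, (1 - q ^ n / q ^ j) = 0
    rw [Finset.prod_eq_zero hn (by rw [div_self (hqn n)]; norm_num), mul_zero]
  have hS : (∑' n : ℕ, g n) = q ^ (m * (k' + 1)) *
      ((∏ l ∈ Finset.range m, (1 - q ^ (l + 1))) /
        ∏ j ∈ Finset.range (m + 1), (1 - q ^ (k' + 1 + j))) := by
    rw [← Summable.sum_add_tsum_nat_add m hgsum, Finset.sum_eq_zero hg0, zero_add,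
      tsum_congr hgshift, tsum_mul_left, key hq0 hq1 m (k' + 1) (by omega)]
  rw [hS]
  -- final algebraic computation
  have hA : (∏ l ∈ Finset.range m, (1 - q ^ (l + 1))) = (1 - q) ^ m * qfact q m := by
    have : (∏ l ∈ Finset.range m, (1 - q ^ (l + 1)))
        = ∏ l ∈ Finset.range m, ((1 - q) * qnum q (l + 1)) := by
      refine Finset.prod_congr rfl fun l _ => ?_
      rw [qnum, mul_div_cancel₀ _ hq1']
    rw [this, Finset.prod_mul_distrib, Finset.prod_const, Finset.card_range, qfact]
  have hD : (∏ j ∈ Finset.range (m + 1), (1 - q ^ (k' + 1 + j)))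
      = (1 - q) ^ (m + 1) * ∏ j ∈ Finset.range (m + 1), qnum q (k' + 1 + j) := by
    have : (∏ j ∈ Finset.range (m + 1), (1 - q ^ (k' + 1 + j)))
        = ∏ j ∈ Finset.range (m + 1), ((1 - q) * qnum q (k' + 1 + j)) := by
      refine Finset.prod_congr rfl fun j _ => ?_
      rw [qnum, mul_div_cancel₀ _ hq1']
    rw [this, Finset.prod_mul_distrib, Finset.prod_const, Finset.card_range]
  have hfact : qfact q (k' + 1 + m) = qfact q k' * ∏ j ∈ Finset.range (m + 1), qnum q (k' + 1 + j) := by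
    rw [qfact, show k' + 1 + m = k' + (m + 1) by ring, Finset.prod_range_add]
    congr 1
    refine Finset.prod_congr rfl fun j _ => ?_
    congr 1
    ring
  have hqnumpos : ∀ n : ℕ, 0 < qnum q (n + 1) := by
    intro n
    rw [qnum]
    apply div_pos (factor_pos hq0 hq1 n)
    linarith
  have hqfactpos : ∀ n : ℕ, 0 < qfact q n := by
    intro n
    rw [qfact]
    exact Finset.prod_pos fun i _ => hqnumpos i
  have hQpos : 0 < ∏ j ∈ Finset.range (m + 1), qnum q (k' + 1 + j) := by
    apply Finset.prod_pos
    intro j _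
    have : k' + 1 + j = (k' + j) + 1 := by ring
    rw [this]
    exact hqnumpos _
  rw [hA, hD, hc, hR, hfact]
  have h1 : qfact q k' ≠ 0 := (hqfactpos k').ne'
  have h2 : qfact q m ≠ 0 := (hqfactpos m).ne'
  have h3 : (∏ j ∈ Finset.range (m + 1), qnum q (k' + 1 + j)) ≠ 0 := hQpos.ne'
  have h4 : (q : ℝ) ^ ((k' + 1) * m) ≠ 0 := hqn _
  field_simp
  ring
end

section
/- Let 0 < q < 1, let t > 0 be a real number, and let ν ≥ 2 be a natural number. Define F(y, z) = z^ν/t^ν − (z^ν/t^ν) ∏_{i=1}^{ν} (1 − y/(q^{i-1} z)). Then for all real y ≠ 0 and z ≠ 0, applying the q-derivative first in the variable y and then in the variable z to F yields q^{-(ν-1)} [ν]_q [ν−1]_q (z^{ν-2}/t^ν) ∏_{i=1}^{ν-2} (1 − y/(q^{i} z)). That is, with G(y,z) = (F(y,z) − F(qy,z))/((1−q)y), one has (G(y,z) − G(y,qz))/((1−q)z) = q^{-(ν-1)} [ν]_q [ν−1]_q (z^{ν-2}/t^ν) ∏_{i=1}^{ν-2} (1 − y/(q^{i} z)). -/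
/-- Applying the `q`-derivative first in `y` and then in `z` to the joint `q`-distribution
function `F(y,z) = z^ν/t^ν − (z^ν/t^ν) ∏_{i=1}^{ν} (1 − y/(q^{i-1} z))` of the minimum and
maximum yields the joint `q`-density
`q^{-(ν-1)} [ν]_q [ν−1]_q (z^{ν-2}/t^ν) ∏_{i=1}^{ν-2} (1 − y/(q^i z))`. -/
theorem stmt14 (q t : ℝ) (hq0 : 0 < q) (hq1 : q < 1) (ht : 0 < t) (ν : ℕ) (hν : 2 ≤ ν)
    (F : ℝ → ℝ → ℝ)
    (hF : ∀ y z : ℝ, F y z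
      = z ^ ν / t ^ ν - z ^ ν / t ^ ν * ∏ i ∈ Finset.range ν, (1 - y / (q ^ i * z)))
    (G : ℝ → ℝ → ℝ)
    (hG : ∀ y z : ℝ, G y z = (F y z - F (q * y) z) / ((1 - q) * y))
    (y z : ℝ) (hy : y ≠ 0) (hz : z ≠ 0) :
    (G y z - G y (q * z)) / ((1 - q) * z)
      = q ^ (-((ν : ℤ) - 1)) * qnum q ν * qnum q (ν - 1) * (z ^ (ν - 2) / t ^ ν)
          * ∏ i ∈ Finset.range (ν - 2), (1 - y / (q ^ (i + 1) * z)) := by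
  obtain ⟨n, rfl⟩ : ∃ n, ν = n + 2 := ⟨ν - 2, by omega⟩
  have hq : q ≠ 0 := hq0.ne'
  have hqn : q ^ (n + 1) ≠ 0 := pow_ne_zero _ hq
  have h1q : (1 : ℝ) - q ≠ 0 := by linarith
  have ht' : t ≠ 0 := ht.ne'
  have htn : t ^ (n + 2) ≠ 0 := pow_ne_zero _ ht'
  have hqz : q * z ≠ 0 := mul_ne_zero hq hz
  -- formula for G y w
  have hGval : ∀ w : ℝ, w ≠ 0 → G y w
      = ((q ^ (n + 1))⁻¹ - q) / (1 - q) * (w ^ (n + 1) / t ^ (n + 2))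
          * ∏ i ∈ Finset.range (n + 1), (1 - y / (q ^ i * w)) := by
    intro w hw
    have hP : ∏ i ∈ Finset.range (n + 2), (1 - y / (q ^ i * w))
        = (∏ i ∈ Finset.range (n + 1), (1 - y / (q ^ i * w)))
            * (1 - y / (q ^ (n + 1) * w)) := Finset.prod_range_succ _ _
    have hP' : ∏ i ∈ Finset.range (n + 2), (1 - q * y / (q ^ i * w))
        = (∏ i ∈ Finset.range (n + 1), (1 - y / (q ^ i * w))) * (1 - q * y / w) := by
      rw [Finset.prod_range_succ']
      congr 1
      · refine Finset.prod_congr rfl fun i _ => ?_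
        have : q ^ i ≠ 0 := pow_ne_zero _ hq
        rw [pow_succ]
        field_simp
      · simp
    rw [hG, hF, hF, hP, hP']
    field_simp
    ring
  rw [hGval z hz, hGval (q * z) hqz]
  have hshift : ∏ i ∈ Finset.range (n + 1), (1 - y / (q ^ i * (q * z)))
      = ∏ i ∈ Finset.range (n + 1), (1 - y / (q ^ (i + 1) * z)) := by
    refine Finset.prod_congr rfl fun i _ => ?_
    rw [pow_succ]
    ring_nf
  rw [hshift]
  rw [show (∏ i ∈ Finset.range (n + 1), (1 - y / (q ^ i * z)))
      = (∏ i ∈ Finset.range n, (1 - y / (q ^ (i + 1) * z))) * (1 - y / (q ^ 0 * z))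
      from Finset.prod_range_succ' _ _]
  rw [Finset.prod_range_succ]
  have hzpow : q ^ (-(((n + 2 : ℕ) : ℤ) - 1)) = (q ^ (n + 1))⁻¹ := by
    rw [show -(((n + 2 : ℕ) : ℤ) - 1) = -((n + 1 : ℕ) : ℤ) by push_cast; ring,
      zpow_neg, zpow_natCast]
  rw [hzpow]
  simp only [qnum, show n + 2 - 1 = n + 1 from rfl, show n + 2 - 2 = n from rfl]
  field_simp
  ring
end
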